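/- Let (X,Y) = {(X_n,Y_n)}_{n=1}^∞ be an arbitrary random sequence, where (X^n, Y^n) ~ P_{X^nY^n} takes values in (𝒳×𝒴)^n with 𝒳, 𝒴 finite. Then lim_{ε→0} limsup_{n→∞} H_0^ε(X^n|Y^n)/n = H̄(X|Y), the spectral-sup conditional entropy rate. -/
import Mathlib


open scoped Classical BigOperators

/-- The conditional smooth max Rényi entropy of order zero,
`H₀^ε(A|B) = min_{Q ∈ B^ε(P_{AB})} log₂ max_{b} |Supp(Q(A|B = b))|`. -/
noncomputable def H0sm {α β : Type*} [Fintype α] [Fintype β]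
    (ε : ℝ) (PAB : α × β → ℝ) : ℝ :=
  sInf {r : ℝ | ∃ Q : α × β → ℝ,
    (∀ p, 0 ≤ Q p ∧ Q p ≤ PAB p) ∧ 1 - ε ≤ ∑ p, Q p ∧
    r = Real.logb 2
      (↑(Finset.univ.sup fun b : β =>
        (Finset.univ.filter fun a : α => 0 < Q (a, b)).card) : ℝ)}

section Aux
open Real Filter Finset

variable {α β : Type*} [Fintype α] [Fintype β]

private lemma logb_natCast_nonneg (m : ℕ) : 0 ≤ Real.logb 2 (m : ℝ) := by
  rcases Nat.eq_zero_or_pos m with h | h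
  · simp [h]
  · exact Real.logb_nonneg one_lt_two (by exact_mod_cast h)

private lemma logb_natCast_mono {s c : ℕ} (h : s ≤ c) : Real.logb 2 (s : ℝ) ≤ Real.logb 2 (c : ℝ) := by
  rcases Nat.eq_zero_or_pos s with h0 | h0
  · simpa [h0] using logb_natCast_nonneg c
  · exact Real.logb_le_logb_of_le one_lt_two (by exact_mod_cast h0) (by exact_mod_cast h)

private lemma H0sm_bddBelow (ε : ℝ) (Pr : α × β → ℝ) :
    BddBelow {r : ℝ | ∃ Q : α × β → ℝ,
      (∀ p, 0 ≤ Q p ∧ Q p ≤ Pr p) ∧ 1 - ε ≤ ∑ p, Q p ∧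
      r = Real.logb 2
        (↑(Finset.univ.sup fun b : β =>
          (Finset.univ.filter fun a : α => 0 < Q (a, b)).card) : ℝ)} :=
  ⟨0, by rintro r ⟨Q, _, _, rfl⟩; exact logb_natCast_nonneg _⟩

private lemma H0sm_le (ε : ℝ) (Pr Q : α × β → ℝ) (hQ : ∀ p, 0 ≤ Q p ∧ Q p ≤ Pr p)
    (hs : 1 - ε ≤ ∑ p, Q p) :
    H0sm ε Pr ≤ Real.logb 2
      (↑(Finset.univ.sup fun b : β =>
        (Finset.univ.filter fun a : α => 0 < Q (a, b)).card) : ℝ) :=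
  csInf_le (H0sm_bddBelow ε Pr) ⟨Q, hQ, hs, rfl⟩

private lemma le_H0sm (ε c : ℝ) (hε : 0 ≤ ε) (Pr : α × β → ℝ)
    (hPr0 : ∀ p, 0 ≤ Pr p) (hPr1 : ∑ p, Pr p = 1)
    (h : ∀ Q : α × β → ℝ, (∀ p, 0 ≤ Q p ∧ Q p ≤ Pr p) → 1 - ε ≤ ∑ p, Q p →
      c ≤ Real.logb 2
        (↑(Finset.univ.sup fun b : β =>
          (Finset.univ.filter fun a : α => 0 < Q (a, b)).card) : ℝ)) :
    c ≤ H0sm ε Pr := by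
  refine le_csInf ⟨_, ⟨Pr, fun p => ⟨hPr0 p, le_rfl⟩, by rw [hPr1]; linarith, rfl⟩⟩ ?_
  rintro r ⟨Q, h1, h2, rfl⟩; exact h Q h1 h2

private lemma H0sm_nonneg (ε : ℝ) (hε : 0 ≤ ε) (Pr : α × β → ℝ)
    (hPr0 : ∀ p, 0 ≤ Pr p) (hPr1 : ∑ p, Pr p = 1) : 0 ≤ H0sm ε Pr :=
  le_H0sm ε 0 hε Pr hPr0 hPr1 (fun _ _ _ => logb_natCast_nonneg _)

private lemma H0sm_le_card (ε : ℝ) (hε : 0 ≤ ε) (Pr : α × β → ℝ)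
    (hPr0 : ∀ p, 0 ≤ Pr p) (hPr1 : ∑ p, Pr p = 1) :
    H0sm ε Pr ≤ Real.logb 2 (Fintype.card α : ℝ) := by
  refine (H0sm_le ε Pr Pr (fun p => ⟨hPr0 p, le_rfl⟩) (by rw [hPr1]; linarith)).trans ?_
  apply logb_natCast_mono
  exact Finset.sup_le fun b _ => (Finset.card_filter_le _ _).trans_eq (Finset.card_univ)

/-- The "information spectrum" probability. -/
private noncomputable def Fq (Pr : α × β → ℝ) (N a : ℝ) : ℝ :=
  ∑ p, if -Real.logb 2 (Pr p / ∑ x, Pr (x, p.2)) / N ≤ a then Pr p else 0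


variable {Pr : α × β → ℝ} {N a : ℝ}

private lemma Fq_nonneg (hPr0 : ∀ p, 0 ≤ Pr p) : 0 ≤ Fq Pr N a :=
  Finset.sum_nonneg fun p _ => by split <;> simp [hPr0 p]

private lemma Fq_le_one (hPr0 : ∀ p, 0 ≤ Pr p) (hPr1 : ∑ p, Pr p = 1) : Fq Pr N a ≤ 1 := by
  rw [← hPr1]
  exact Finset.sum_le_sum fun p _ => by split <;> simp [hPr0 p]

private lemma Fq_mono {a' : ℝ} (hPr0 : ∀ p, 0 ≤ Pr p) (h : a ≤ a') : Fq Pr N a ≤ Fq Pr N a' := by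
  refine Finset.sum_le_sum fun p _ => ?_
  by_cases hc : -Real.logb 2 (Pr p / ∑ x, Pr (x, p.2)) / N ≤ a
  · rw [if_pos hc, if_pos (hc.trans h)]
  · rw [if_neg hc]; split <;> simp [hPr0 p]

private lemma ratio_le_one (hPr0 : ∀ p, 0 ≤ Pr p) (p : α × β) :
    Pr p / ∑ x, Pr (x, p.2) ≤ 1 := by
  rcases eq_or_lt_of_le (Finset.sum_nonneg fun x _ => hPr0 (x, p.2)) with h | h
  · rw [← h, div_zero]; norm_num
  · rw [div_le_one h]
    exact Finset.single_le_sum (fun x _ => hPr0 (x, p.2)) (Finset.mem_univ p.1)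

private lemma Fq_of_neg (hPr0 : ∀ p, 0 ≤ Pr p) (hN : 0 < N) (ha : a < 0) : Fq Pr N a = 0 := by
  refine Finset.sum_eq_zero fun p _ => ?_
  rw [if_neg]
  intro hc
  have ht0 : 0 ≤ Pr p / ∑ x, Pr (x, p.2) :=
    div_nonneg (hPr0 p) (Finset.sum_nonneg fun x _ => hPr0 (x, p.2))
  have hlb : Real.logb 2 (Pr p / ∑ x, Pr (x, p.2)) ≤ 0 :=
    Real.logb_nonpos one_lt_two ht0 (ratio_le_one hPr0 p)
  have : (0:ℝ) ≤ -Real.logb 2 (Pr p / ∑ x, Pr (x, p.2)) / N := div_nonneg (by linarith) hN.le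
  linarith

/-- Upper bound: if the spectrum probability at level `a` is at least `1 - ε`, then
`H0sm ε Pr ≤ N * a`. -/
private lemma H0sm_le_mul (ε : ℝ) (hN : 0 < N) (ha : 0 ≤ a)
    (hPr0 : ∀ p, 0 ≤ Pr p) (hF : 1 - ε ≤ Fq Pr N a) :
    H0sm ε Pr ≤ N * a := by
  set Q : α × β → ℝ :=
    fun p => if -Real.logb 2 (Pr p / ∑ x, Pr (x, p.2)) / N ≤ a then Pr p else 0 with hQdef
  have hQ : ∀ p, 0 ≤ Q p ∧ Q p ≤ Pr p := by
    intro p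
    by_cases hc : -Real.logb 2 (Pr p / ∑ x, Pr (x, p.2)) / N ≤ a <;>
      simp [hQdef, hc, hPr0 p]
  refine (H0sm_le ε Pr Q hQ hF).trans ?_
  have key : ∀ b : β, ((Finset.univ.filter fun x : α => 0 < Q (x, b)).card : ℝ) ≤
      (2:ℝ) ^ (N * a) := by
    intro b
    set s := Finset.univ.filter fun x : α => 0 < Q (x, b) with hs
    rcases s.eq_empty_or_nonempty with h | h
    · rw [h]
      simpa using (Real.rpow_nonneg (by norm_num) (N * a))
    · obtain ⟨x₀, hx₀⟩ := h
      have hx₀' : 0 < Q (x₀, b) := (Finset.mem_filter.mp hx₀).2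
      have hP₀ : 0 < Pr (x₀, b) := lt_of_lt_of_le hx₀' (hQ _).2
      have hPY : 0 < ∑ x, Pr (x, b) :=
        lt_of_lt_of_le hP₀ (Finset.single_le_sum (fun x _ => hPr0 (x, b)) (Finset.mem_univ x₀))
      have hmem : ∀ x ∈ s, (2:ℝ) ^ (-(N * a)) ≤ Pr (x, b) / ∑ x', Pr (x', b) := by
        intro x hx
        have hQx : 0 < Q (x, b) := (Finset.mem_filter.mp hx).2
        have hcnd : -Real.logb 2 (Pr (x, b) / ∑ x', Pr (x', b)) / N ≤ a := by
          by_contra hc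
          rw [hQdef] at hQx
          simp only [if_neg hc] at hQx
          exact lt_irrefl 0 hQx
        have hPx : 0 < Pr (x, b) := lt_of_lt_of_le hQx (hQ _).2
        have ht : 0 < Pr (x, b) / ∑ x', Pr (x', b) := div_pos hPx hPY
        have h1 : -(N * a) ≤ Real.logb 2 (Pr (x, b) / ∑ x', Pr (x', b)) := by
          rw [div_le_iff₀ hN] at hcnd
          nlinarith [hcnd]
        exact (Real.le_logb_iff_rpow_le one_lt_two ht).1 h1
      have hcard := Finset.card_nsmul_le_sum s _ _ hmem
      have hsum1 : ∑ x ∈ s, Pr (x, b) / ∑ x', Pr (x', b) ≤ 1 := by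
        calc ∑ x ∈ s, Pr (x, b) / ∑ x', Pr (x', b)
            ≤ ∑ x : α, Pr (x, b) / ∑ x', Pr (x', b) :=
              Finset.sum_le_sum_of_subset_of_nonneg (Finset.subset_univ s)
                (fun x _ _ => div_nonneg (hPr0 (x, b)) hPY.le)
          _ = 1 := by rw [← Finset.sum_div]; exact div_self hPY.ne'
      have h2 : (s.card : ℝ) * (2:ℝ) ^ (-(N * a)) ≤ 1 := by
        have := hcard.trans hsum1
        simpa [nsmul_eq_mul] using this
      have hθ : (0:ℝ) < (2:ℝ) ^ (N * a) := Real.rpow_pos_of_pos (by norm_num) _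
      rw [Real.rpow_neg (by norm_num), ← div_eq_mul_inv, div_le_one hθ] at h2
      exact h2
  set M := Finset.univ.sup fun b : β => (Finset.univ.filter fun x : α => 0 < Q (x, b)).card
    with hM
  rcases Nat.eq_zero_or_pos M with hM0 | hM0
  · rw [hM0]
    simpa using mul_nonneg hN.le ha
  · rcases (Finset.univ (α := β)).eq_empty_or_nonempty with hβ | hβ
    · rw [hM, hβ] at hM0; simp at hM0
    · obtain ⟨b, _, hb⟩ := Finset.exists_mem_eq_sup Finset.univ hβ
        (fun b : β => (Finset.univ.filter fun x : α => 0 < Q (x, b)).card)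
      have : (M:ℝ) ≤ (2:ℝ) ^ (N * a) := by rw [hM, hb]; exact key b
      exact (Real.logb_le_iff_le_rpow one_lt_two (by exact_mod_cast hM0)).2 this


/-- Lower bound: if the spectrum probability at level `a` is at most `1 - δ` and
`ε ≤ δ/2`, then `N * a + log₂(δ/2) ≤ H0sm ε Pr`. -/
private lemma mul_le_H0sm (ε δ : ℝ) (hN : 0 < N) (ha : 0 ≤ a) (hδ : 0 < δ)
    (hε : 0 < ε) (hεδ : ε ≤ δ / 2)
    (hPr0 : ∀ p, 0 ≤ Pr p) (hPr1 : ∑ p, Pr p = 1)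
    (hF : Fq Pr N a ≤ 1 - δ) :
    N * a + Real.logb 2 (δ / 2) ≤ H0sm ε Pr := by
  apply le_H0sm ε _ hε.le Pr hPr0 hPr1
  intro Q hQ hs
  set M := Finset.univ.sup fun b : β => (Finset.univ.filter fun x : α => 0 < Q (x, b)).card
    with hMdef
  set θ : ℝ := (2:ℝ) ^ (-(N * a)) with hθdef
  have hθ : 0 < θ := Real.rpow_pos_of_pos (by norm_num) _
  have key : ∀ p : α × β, Q p ≤
      (if -Real.logb 2 (Pr p / ∑ x, Pr (x, p.2)) / N ≤ a then Pr p else 0) +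
      (if 0 < Q p then θ * ∑ x, Pr (x, p.2) else 0) := by
    intro p
    have hPY0 : 0 ≤ ∑ x, Pr (x, p.2) := Finset.sum_nonneg fun x _ => hPr0 (x, p.2)
    have hsecond : 0 ≤ (if 0 < Q p then θ * ∑ x, Pr (x, p.2) else 0) := by
      split
      · exact mul_nonneg hθ.le hPY0
      · exact le_refl 0
    by_cases hc : -Real.logb 2 (Pr p / ∑ x, Pr (x, p.2)) / N ≤ a
    · rw [if_pos hc]
      have := (hQ p).2
      linarith
    · rw [if_neg hc]
      by_cases hq : 0 < Q p
      · rw [if_pos hq]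
        have hPp : 0 < Pr p := lt_of_lt_of_le hq (hQ p).2
        have hPY : 0 < ∑ x, Pr (x, p.2) :=
          lt_of_lt_of_le hPp (Finset.single_le_sum (fun x _ => hPr0 (x, p.2)) (Finset.mem_univ p.1))
        have ht : 0 < Pr p / ∑ x, Pr (x, p.2) := div_pos hPp hPY
        push_neg at hc
        have h1 : Real.logb 2 (Pr p / ∑ x, Pr (x, p.2)) < -(N * a) := by
          rw [lt_div_iff₀ hN] at hc
          nlinarith [hc]
        have h2 : Pr p / ∑ x, Pr (x, p.2) < θ :=
          (Real.logb_lt_iff_lt_rpow one_lt_two ht).1 h1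
        calc Q p ≤ Pr p := (hQ p).2
          _ = (Pr p / ∑ x, Pr (x, p.2)) * ∑ x, Pr (x, p.2) :=
              (div_mul_cancel₀ _ hPY.ne').symm
          _ ≤ θ * ∑ x, Pr (x, p.2) := mul_le_mul_of_nonneg_right h2.le hPY.le
          _ ≤ 0 + θ * ∑ x, Pr (x, p.2) := by linarith
      · rw [if_neg hq]
        have := not_lt.mp hq
        linarith
  have hsplit : ∑ p, Q p ≤ Fq Pr N a + (M:ℝ) * θ := by
    have h1 : ∑ p, Q p ≤ Fq Pr N a +
        ∑ p : α × β, (if 0 < Q p then θ * ∑ x, Pr (x, p.2) else 0) := by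
      rw [Fq, ← Finset.sum_add_distrib]
      exact Finset.sum_le_sum fun p _ => key p
    refine h1.trans ?_
    have h2 : ∑ p : α × β, (if 0 < Q p then θ * ∑ x, Pr (x, p.2) else 0) ≤ (M:ℝ) * θ := by
      rw [Fintype.sum_prod_type_right]
      have hinner : ∀ b : β,
          (∑ x : α, if 0 < Q (x, b) then θ * ∑ x', Pr (x', b) else 0) ≤
            (M:ℝ) * (θ * ∑ x', Pr (x', b)) := by
        intro b
        have hPYb : 0 ≤ ∑ x', Pr (x', b) := Finset.sum_nonneg fun x _ => hPr0 (x, b)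
        rw [← Finset.sum_filter, Finset.sum_const, nsmul_eq_mul]
        have hcard : ((Finset.univ.filter fun x : α => 0 < Q (x, b)).card : ℝ) ≤ (M:ℝ) :=
          Nat.cast_le.mpr (Finset.le_sup (f := fun b : β => (Finset.univ.filter fun x : α => 0 < Q (x, b)).card) (Finset.mem_univ b))
        exact mul_le_mul_of_nonneg_right hcard (mul_nonneg hθ.le hPYb)
      refine (Finset.sum_le_sum fun b _ => hinner b).trans (le_of_eq ?_)
      have : ∑ b : β, ∑ x : α, Pr (x, b) = 1 := by
        rw [← Fintype.sum_prod_type_right]; exact hPr1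
      calc ∑ b : β, (M:ℝ) * (θ * ∑ x', Pr (x', b))
          = (M:ℝ) * θ * ∑ b : β, ∑ x', Pr (x', b) := by
            rw [Finset.mul_sum]; ring_nf
        _ = (M:ℝ) * θ := by rw [this, mul_one]
    linarith
  have hMθ : δ / 2 ≤ (M:ℝ) * θ := by linarith
  have hM0 : (0:ℝ) < (M:ℝ) := by nlinarith
  have hlog : Real.logb 2 (δ / 2) ≤ Real.logb 2 ((M:ℝ) * θ) :=
    Real.logb_le_logb_of_le one_lt_two (by linarith) hMθ
  rw [Real.logb_mul hM0.ne' hθ.ne', hθdef,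
    Real.logb_rpow (by norm_num) (by norm_num)] at hlog
  linarith

/-- Quantitative bound used to show nonemptiness of the `liminf = 1` set. -/
private lemma one_sub_Fq_le (hN : 0 < N) (ha : 0 ≤ a)
    (hPr0 : ∀ p, 0 ≤ Pr p) (hPr1 : ∑ p, Pr p = 1) :
    1 - Fq Pr N a ≤ (Fintype.card α : ℝ) * (2:ℝ) ^ (-(N * a)) := by
  set θ : ℝ := (2:ℝ) ^ (-(N * a)) with hθdef
  have hθ : 0 < θ := Real.rpow_pos_of_pos (by norm_num) _
  have key : ∀ p : α × β,
      Pr p - (if -Real.logb 2 (Pr p / ∑ x, Pr (x, p.2)) / N ≤ a then Pr p else 0) ≤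
        θ * ∑ x, Pr (x, p.2) := by
    intro p
    have hPY0 : 0 ≤ ∑ x, Pr (x, p.2) := Finset.sum_nonneg fun x _ => hPr0 (x, p.2)
    by_cases hc : -Real.logb 2 (Pr p / ∑ x, Pr (x, p.2)) / N ≤ a
    · rw [if_pos hc]
      simpa using mul_nonneg hθ.le hPY0
    · rw [if_neg hc]
      have ht0 : 0 ≤ Pr p / ∑ x, Pr (x, p.2) := div_nonneg (hPr0 p) hPY0
      have htne : Pr p / ∑ x, Pr (x, p.2) ≠ 0 := by
        intro h0
        apply hc
        rw [h0, Real.logb_zero]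
        simpa using ha
      have ht : 0 < Pr p / ∑ x, Pr (x, p.2) := lt_of_le_of_ne ht0 (Ne.symm htne)
      have hPY : 0 < ∑ x, Pr (x, p.2) := by
        rcases eq_or_lt_of_le hPY0 with h | h
        · exfalso; apply htne; rw [← h, div_zero]
        · exact h
      push_neg at hc
      have h1 : Real.logb 2 (Pr p / ∑ x, Pr (x, p.2)) < -(N * a) := by
        rw [lt_div_iff₀ hN] at hc
        nlinarith [hc]
      have h2 : Pr p / ∑ x, Pr (x, p.2) < θ :=
        (Real.logb_lt_iff_lt_rpow one_lt_two ht).1 h1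
      calc Pr p - 0 = (Pr p / ∑ x, Pr (x, p.2)) * ∑ x, Pr (x, p.2) := by
            rw [sub_zero, div_mul_cancel₀ _ hPY.ne']
        _ ≤ θ * ∑ x, Pr (x, p.2) := mul_le_mul_of_nonneg_right h2.le hPY.le
  have h1 : 1 - Fq Pr N a = ∑ p : α × β,
      (Pr p - (if -Real.logb 2 (Pr p / ∑ x, Pr (x, p.2)) / N ≤ a then Pr p else 0)) := by
    rw [Finset.sum_sub_distrib, hPr1]; rfl
  rw [h1]
  refine (Finset.sum_le_sum fun p _ => key p).trans ?_
  have h2 : ∑ p : α × β, θ * ∑ x, Pr (x, p.2) = (Fintype.card α : ℝ) * θ := by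
    rw [Fintype.sum_prod_type]
    have : ∀ x : α, ∑ b : β, θ * ∑ x', Pr (x', b) = θ := by
      intro x
      rw [← Finset.mul_sum, ← Fintype.sum_prod_type_right, hPr1, mul_one]
    rw [Finset.sum_congr rfl fun x _ => this x, Finset.sum_const, nsmul_eq_mul,
      Finset.card_univ]
  exact le_of_eq h2

end Aux


/-- for an arbitrary sequence of joint pmfs `P n` on `𝒳^(n+1) × 𝒴^(n+1)`,
`lim_{ε→0⁺} limsup_n H₀^ε(X^n|Y^n)/n = H̄(X|Y)`, the spectral-sup conditional entropy
rate `H̄(X|Y) = inf {a | liminf_n Pr{(1/n) log₂ (1/P_{X^n|Y^n}(X^n|Y^n)) ≤ a} = 1}`. -/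
theorem smooth_conditional_entropy_rate_eq_specSup
    {X Y : Type*} [Fintype X] [Fintype Y]
    (P : (n : ℕ) → ((Fin (n + 1) → X) × (Fin (n + 1) → Y)) → ℝ)
    (hP0 : ∀ n p, 0 ≤ P n p) (hP1 : ∀ n, ∑ p, P n p = 1)
    (Hbar : ℝ)
    (hHbar : Hbar = sInf {a : ℝ |
      Filter.liminf (fun n =>
        ∑ p : (Fin (n + 1) → X) × (Fin (n + 1) → Y),
          if -Real.logb 2 (P n p / ∑ x, P n (x, p.2)) / (n + 1) ≤ a then P n p else 0)
        Filter.atTop = 1}) :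
    Filter.Tendsto
      (fun ε : ℝ =>
        Filter.limsup (fun n => H0sm ε (P n) / (n + 1)) Filter.atTop)
      (nhdsWithin 0 (Set.Ioi 0)) (nhds Hbar) := by
  classical
  -- Reinterpret the spectrum sums through `Fq`.
  set S : Set ℝ := {a : ℝ |
    Filter.liminf (fun n => Fq (P n) ((n : ℝ) + 1) a) Filter.atTop = 1} with hSdef
  have hHS : Hbar = sInf S := hHbar
  have hNpos : ∀ n : ℕ, (0:ℝ) < (n : ℝ) + 1 := fun n => by positivity
  -- `X` is nonempty.
  have hXne : Nonempty X := by
    by_contra hX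
    have hemp : ∃ p : (Fin 1 → X) × (Fin 1 → Y), P 0 p ≠ 0 := by
      by_contra h
      push_neg at h
      have h1 := hP1 0
      rw [Finset.sum_eq_zero (fun p _ => h p)] at h1
      norm_num at h1
    obtain ⟨p₀, _⟩ := hemp
    exact hX ⟨p₀.1 0⟩
  have hXcard : 1 ≤ Fintype.card X := Fintype.card_pos_iff.mpr hXne
  set L : ℝ := Real.logb 2 (Fintype.card X : ℝ) with hLdef
  have hL0 : 0 ≤ L := logb_natCast_nonneg _
  -- The sequence whose limsup we study.
  set u : ℝ → ℕ → ℝ := fun ε n => H0sm ε (P n) / ((n : ℝ) + 1) with hudef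
  set g : ℝ → ℝ := fun ε => Filter.limsup (u ε) Filter.atTop with hgdef
  have hu0 : ∀ ε : ℝ, 0 ≤ ε → ∀ n, 0 ≤ u ε n := fun ε hε n =>
    div_nonneg (H0sm_nonneg ε hε (P n) (hP0 n) (hP1 n)) (hNpos n).le
  have huB : ∀ ε : ℝ, 0 ≤ ε → ∀ n, u ε n ≤ L := by
    intro ε hε n
    have h := H0sm_le_card ε hε (P n) (hP0 n) (hP1 n)
    have hcard : Fintype.card (Fin (n + 1) → X) = Fintype.card X ^ (n + 1) := by
      rw [Fintype.card_fun, Fintype.card_fin]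
    rw [hcard] at h
    have h2 : Real.logb 2 ((Fintype.card X ^ (n + 1) : ℕ) : ℝ) = ((n : ℝ) + 1) * L := by
      push_cast
      rw [Real.logb_pow]
      push_cast
      ring
    rw [h2] at h
    rw [hudef]
    rw [div_le_iff₀ (hNpos n)]
    linarith
  have hb_le : ∀ ε : ℝ, 0 ≤ ε → Filter.IsBoundedUnder (· ≤ ·) Filter.atTop (u ε) :=
    fun ε hε => Filter.isBoundedUnder_of ⟨L, fun n => huB ε hε n⟩
  have hb_ge : ∀ ε : ℝ, 0 ≤ ε → Filter.IsBoundedUnder (· ≥ ·) Filter.atTop (u ε) :=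
    fun ε hε => Filter.isBoundedUnder_of ⟨0, fun n => hu0 ε hε n⟩
  have hFb_le : ∀ a : ℝ, Filter.IsBoundedUnder (· ≤ ·) Filter.atTop
      (fun n => Fq (P n) ((n : ℝ) + 1) a) :=
    fun a => Filter.isBoundedUnder_of ⟨1, fun n => Fq_le_one (hP0 n) (hP1 n)⟩
  have hFb_ge : ∀ a : ℝ, Filter.IsBoundedUnder (· ≥ ·) Filter.atTop
      (fun n => Fq (P n) ((n : ℝ) + 1) a) :=
    fun a => Filter.isBoundedUnder_of ⟨0, fun n => Fq_nonneg (hP0 n)⟩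
  -- `S` is nonempty : `L + 1 ∈ S`.
  have hSne : (L + 1) ∈ S := by
    rw [hSdef]
    show Filter.liminf (fun n => Fq (P n) ((n : ℝ) + 1) (L + 1)) Filter.atTop = 1
    apply Filter.Tendsto.liminf_eq
    have hlow : ∀ n : ℕ, 1 - (1/2 : ℝ) ^ (n + 1) ≤ Fq (P n) ((n : ℝ) + 1) (L + 1) := by
      intro n
      have h := one_sub_Fq_le (Pr := P n) (hNpos n) (by linarith : (0:ℝ) ≤ L + 1)
        (hP0 n) (hP1 n)
      have hcard : (Fintype.card ((Fin (n + 1) → X)) : ℝ) = (Fintype.card X : ℝ) ^ (n + 1) := by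
        rw [Fintype.card_fun, Fintype.card_fin]; push_cast; ring
      rw [hcard] at h
      have hcX : (0:ℝ) < (Fintype.card X : ℝ) := by exact_mod_cast hXcard
      have hexp : -(((n : ℝ) + 1) * (L + 1)) = (-(((n : ℝ) + 1) * L)) + (-((n : ℝ) + 1)) := by
        ring
      have h2L : (2:ℝ) ^ (((n : ℝ) + 1) * L) = (Fintype.card X : ℝ) ^ (n + 1) := by
        rw [mul_comm, Real.rpow_mul (by norm_num : (0:ℝ) ≤ 2), hLdef,
          Real.rpow_logb (by norm_num) (by norm_num) hcX]
        rw [show ((n : ℝ) + 1) = ((n + 1 : ℕ) : ℝ) by push_cast; ring, Real.rpow_natCast]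
      have h2N : (2:ℝ) ^ (-((n : ℝ) + 1)) = (1/2 : ℝ) ^ (n + 1) := by
        rw [Real.rpow_neg (by norm_num : (0:ℝ) ≤ 2),
          show ((n : ℝ) + 1) = ((n + 1 : ℕ) : ℝ) by push_cast; ring, Real.rpow_natCast]
        rw [div_pow, one_pow]
        rw [inv_eq_one_div]
      have hbnd : (Fintype.card X : ℝ) ^ (n + 1) * (2:ℝ) ^ (-(((n : ℝ) + 1) * (L + 1)))
          = (1/2 : ℝ) ^ (n + 1) := by
        rw [hexp, Real.rpow_add (by norm_num : (0:ℝ) < 2), Real.rpow_neg (by norm_num : (0:ℝ) ≤ 2),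
          h2L, h2N, ← mul_assoc, mul_inv_cancel₀ (by positivity), one_mul]
      rw [hbnd] at h
      linarith
    have hup : ∀ n : ℕ, Fq (P n) ((n : ℝ) + 1) (L + 1) ≤ 1 := fun n =>
      Fq_le_one (hP0 n) (hP1 n)
    have htd : Filter.Tendsto (fun n : ℕ => 1 - (1/2 : ℝ) ^ (n + 1)) Filter.atTop (nhds 1) := by
      have h1 : Filter.Tendsto (fun n : ℕ => (1/2 : ℝ) ^ n) Filter.atTop (nhds 0) :=
        tendsto_pow_atTop_nhds_zero_of_lt_one (by norm_num) (by norm_num)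
      have h2 := h1.comp (Filter.tendsto_add_atTop_nat 1)
      have h3 : Filter.Tendsto (fun n : ℕ => (1/2 : ℝ) ^ (n + 1)) Filter.atTop (nhds 0) := h2
      simpa using tendsto_const_nhds.sub h3
    exact tendsto_of_tendsto_of_tendsto_of_le_of_le htd tendsto_const_nhds
      (fun n => hlow n) (fun n => hup n)
  -- elements of `S` are nonnegative
  have hS0 : ∀ a ∈ S, (0:ℝ) ≤ a := by
    intro a haS
    by_contra h
    push_neg at h
    have hz : (fun n : ℕ => Fq (P n) ((n : ℝ) + 1) a) = fun _ => (0:ℝ) := by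
      funext n
      exact Fq_of_neg (hP0 n) (hNpos n) h
    rw [hSdef] at haS
    simp only [Set.mem_setOf_eq, hz, Filter.liminf_const] at haS
    norm_num at haS
  have hbdd : BddBelow S := ⟨0, hS0⟩
  have hHbar0 : 0 ≤ Hbar := hHS ▸ le_csInf ⟨L + 1, hSne⟩ hS0
  -- Upper bound: for every positive ε, `g ε ≤ Hbar`.
  have hup : ∀ ε : ℝ, 0 < ε → g ε ≤ Hbar := by
    intro ε hε
    by_contra hgt
    push_neg at hgt
    set A : ℝ := (Hbar + g ε) / 2 with hAdef
    have hA1 : Hbar < A := by rw [hAdef]; linarith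
    have hA2 : A < g ε := by rw [hAdef]; linarith
    have hA0 : 0 ≤ A := le_trans hHbar0 hA1.le
    obtain ⟨a', ha'S, ha'A⟩ := (csInf_lt_iff hbdd ⟨L + 1, hSne⟩).1 (hHS ▸ hA1)
    have hlim1 : Filter.liminf (fun n => Fq (P n) ((n : ℝ) + 1) a') Filter.atTop = 1 := ha'S
    have hev : ∀ᶠ n in Filter.atTop, 1 - ε < Fq (P n) ((n : ℝ) + 1) a' :=
      Filter.eventually_lt_of_lt_liminf (by rw [hlim1]; linarith) (hFb_ge a')
    have hev2 : ∀ᶠ n in Filter.atTop, u ε n ≤ A := by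
      filter_upwards [hev] with n hn
      have h1 : 1 - ε ≤ Fq (P n) ((n : ℝ) + 1) A := le_trans hn.le (Fq_mono (hP0 n) ha'A.le)
      have h2 : H0sm ε (P n) ≤ ((n : ℝ) + 1) * A := H0sm_le_mul ε (hNpos n) hA0 (hP0 n) h1
      rw [hudef]
      rw [div_le_iff₀ (hNpos n)]
      linarith
    have hfin : g ε ≤ A :=
      Filter.limsup_le_of_le ((hb_ge ε hε.le).isCoboundedUnder_le) hev2
    linarith
  -- Conclude by the order characterization of limits.
  rw [tendsto_order]
  constructor
  · -- lower bound direction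
    intro b hb
    rcases lt_or_ge b 0 with hb0 | hb0
    · refine eventually_mem_nhdsWithin.mono fun ε hε => ?_
      have hε0 : (0:ℝ) < ε := hε
      have hge : (0:ℝ) ≤ g ε :=
        Filter.le_limsup_of_frequently_le
          (Filter.Frequently.of_forall fun n => hu0 ε hε0.le n) (hb_le ε hε0.le)
      linarith
    · set a : ℝ := (b + Hbar) / 2 with hadef
      have hba : b < a := by rw [hadef]; linarith
      have haH : a < Hbar := by rw [hadef]; linarith
      have ha0 : 0 ≤ a := by rw [hadef]; linarith
      have haS : a ∉ S := by
        intro h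
        have := csInf_le hbdd h
        rw [← hHS] at this
        linarith
      have hliminfle : Filter.liminf (fun n => Fq (P n) ((n : ℝ) + 1) a) Filter.atTop ≤ 1 :=
        Filter.liminf_le_of_frequently_le
          (Filter.Frequently.of_forall fun n => Fq_le_one (hP0 n) (hP1 n)) (hFb_ge a)
      have hc : Filter.liminf (fun n => Fq (P n) ((n : ℝ) + 1) a) Filter.atTop < 1 :=
        lt_of_le_of_ne hliminfle (by rw [hSdef] at haS; exact haS)
      set c : ℝ := Filter.liminf (fun n => Fq (P n) ((n : ℝ) + 1) a) Filter.atTop with hcdef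
      set δ : ℝ := (1 - c) / 2 with hδdef
      have hδ : 0 < δ := by rw [hδdef]; linarith
      have hfreq : ∃ᶠ n in Filter.atTop, Fq (P n) ((n : ℝ) + 1) a < 1 - δ := by
        apply Filter.frequently_lt_of_liminf_lt ((hFb_le a).isCoboundedUnder_ge)
        rw [← hcdef, hδdef]
        linarith
      filter_upwards [Ioc_mem_nhdsGT (half_pos hδ)] with ε hε
      obtain ⟨hε0, hεδ⟩ := hε
      set b' : ℝ := (b + a) / 2 with hb'def
      have hbb' : b < b' := by rw [hb'def]; linarith
      have hb'a : b' < a := by rw [hb'def]; linarith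
      have hev3 : ∀ᶠ n : ℕ in Filter.atTop, b' - a ≤ Real.logb 2 (δ / 2) / ((n : ℝ) + 1) := by
        have htd : Filter.Tendsto (fun n : ℕ => Real.logb 2 (δ / 2) / ((n : ℝ) + 1))
            Filter.atTop (nhds 0) := by
          apply Filter.Tendsto.div_atTop (tendsto_const_nhds)
          exact Filter.tendsto_atTop_add_const_right _ 1 tendsto_natCast_atTop_atTop
        exact (htd.eventually (eventually_gt_nhds (by linarith : b' - a < 0))).mono
          fun n hn => hn.le
      have hfreq2 : ∃ᶠ n in Filter.atTop, b' ≤ u ε n := by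
        refine (hfreq.and_eventually hev3).mono ?_
        rintro n ⟨h1, h2⟩
        have hH : ((n : ℝ) + 1) * a + Real.logb 2 (δ / 2) ≤ H0sm ε (P n) :=
          mul_le_H0sm ε δ (hNpos n) ha0 hδ hε0 hεδ (hP0 n) (hP1 n) h1.le
        rw [hudef]
        rw [le_div_iff₀ (hNpos n)]
        have h2' := (le_div_iff₀ (hNpos n)).1 h2
        nlinarith [h2', hH]
      have hfin : b' ≤ g ε :=
        Filter.le_limsup_of_frequently_le hfreq2 (hb_le ε hε0.le)
      linarith
  · intro b hb
    refine eventually_mem_nhdsWithin.mono fun ε hε => ?_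
    exact lt_of_le_of_lt (hup ε hε) hb
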